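/- Let α ∈ (1, 2). There exists θ₀ ∈ (π/2, π) such that for every θ ∈ (π/2, θ₀) there is a constant c > 0, independent of τ and z, with the property: for every time step τ > 0 and every z ∈ D(τ,θ) one has δ_τ(e^{−zτ}) ≠ 0 and |δ_τ(e^{−zτ})^α − z^α| ≤ c τ³ |z|^{3+α}, where δ_τ is the BDF3 generating symbol and powers are principal complex powers. -/

import Mathlib

open Complex Set

/-- The BDF3 generating symbol `δ_τ(ξ) = τ⁻¹(11/6 − 3ξ + (3/2)ξ² − (1/3)ξ³)`. -/
noncomputable def bdf3 (τ : ℝ) (ξ : ℂ) : ℂ :=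
  (τ : ℂ)⁻¹ * (11 / 6 - 3 * ξ + (3 / 2) * ξ ^ 2 - (1 / 3) * ξ ^ 3)

/-- The region `D(τ,θ)`: nonzero `z` with either `|arg z| = θ` and `|Im z| ≤ π/τ`,
or `|z| ≤ 1/τ` and `|arg z| ≤ θ`. -/
def Dset (τ θ : ℝ) : Set ℂ :=
  {z : ℂ | z ≠ 0 ∧
    ((|z.arg| = θ ∧ |z.im| ≤ Real.pi / τ) ∨ (‖z‖ ≤ 1 / τ ∧ |z.arg| ≤ θ))}

noncomputable def gBDF (u : ℂ) : ℂ := 11/6 - 3*u + (3/2)*u^2 - (1/3)*u^3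

lemma exp45 : Real.exp (4/5) ≤ 2.23 := by
  have h := Real.exp_bound (x := 4/5) (by rw [_root_.abs_of_nonneg] <;> norm_num) (n := 4) (by norm_num)
  rw [abs_le] at h
  have h2 := h.2
  rw [_root_.abs_of_nonneg (by norm_num : (0:ℝ) ≤ 4/5)] at h2
  norm_num [Finset.sum_range_succ, Nat.factorial] at h2 ⊢
  linarith

lemma gBDF_ne (w : ℂ) (hw : w ≠ 0) (hre : -(4/5) ≤ w.re) (habs : ‖w‖ ≤ 4) :
    gBDF (Complex.exp (-w)) ≠ 0 := by
  intro h
  set u := Complex.exp (-w) with hu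
  have hfac : (u - 1) * (u^2 - (7/2)*u + 11/2) = 0 := by
    have : (u - 1) * (u^2 - (7/2)*u + 11/2) = -3 * gBDF u := by unfold gBDF; ring
    rw [this, h, mul_zero]
  rcases mul_eq_zero.mp hfac with h1 | h2
  · -- u = 1
    have hu1 : Complex.exp (-w) = 1 := by rwa [sub_eq_zero] at h1
    obtain ⟨n, hn⟩ := Complex.exp_eq_one_iff.mp hu1
    have hn0 : n ≠ 0 := by
      rintro rfl
      simp at hn
      exact hw (by simpa [neg_eq_zero] using hn)
    have habseq : ‖w‖ = |(n:ℝ)| * (2 * Real.pi) := by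
      have hwn : w = -((n:ℂ) * (2 * Real.pi * Complex.I)) := by rw [← hn]; ring
      rw [hwn]
      rw [norm_neg, norm_mul, norm_mul, norm_mul, Complex.norm_I]
      simp [Complex.norm_intCast, Complex.norm_real, Real.norm_eq_abs, abs_of_pos Real.pi_pos]
      all_goals ring
    have h1n : (1:ℝ) ≤ |(n:ℝ)| := by
      rw [← Int.cast_abs]
      exact_mod_cast Int.one_le_abs (by exact_mod_cast hn0)
    have hpi : (3:ℝ) < Real.pi := Real.pi_gt_three
    nlinarith [habseq ▸ habs]
  · -- quadratic root: |u|² = 11/2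
    have hre2 : u.re^2 - u.im^2 - (7/2)*u.re + 11/2 = 0 := by
      have := congrArg Complex.re h2
      simpa [pow_two, Complex.mul_re, Complex.sub_re, Complex.add_re, Complex.ofReal_re] using this
    have him : u.re*u.im + u.im*u.re - (7/2)*u.im = 0 := by
      have := congrArg Complex.im h2
      simpa [pow_two, Complex.mul_im, Complex.sub_im, Complex.add_im] using this
    have hns : Complex.normSq u = 11/2 := by
      rcases mul_eq_zero.mp (show u.im * (2*u.re - 7/2) = 0 by linarith [him]) with hy | hx
      · nlinarith [hre2, hy, sq_nonneg (u.re - 7/4)]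
      · have hxv : u.re = 7/4 := by linarith
        rw [Complex.normSq_apply]
        nlinarith [hre2, hxv]
    have habsu : ‖u‖ = Real.exp (-w.re) := by
      rw [hu, Complex.norm_exp]; simp
    have : Real.exp (-w.re) ^ 2 = 11/2 := by
      rw [← habsu, Complex.sq_norm, hns]
    have hle : Real.exp (-w.re) ≤ 2.23 := by
      calc Real.exp (-w.re) ≤ Real.exp (4/5) := Real.exp_le_exp.mpr (by linarith)
        _ ≤ 2.23 := exp45
    nlinarith [Real.exp_pos (-w.re)]

lemma exp_taylor4 (x : ℂ) (hx : ‖x‖ ≤ 1) :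
    ‖Complex.exp x - (1 + x + x^2/2 + x^3/6)‖ ≤ ‖x‖^4 * (5/96) := by
  have h := Complex.exp_bound hx (n := 4) (by norm_num)
  have hsum : ∑ m ∈ Finset.range 4, x ^ m / m.factorial = 1 + x + x^2/2 + x^3/6 := by
    simp [Finset.sum_range_succ, Nat.factorial]
  rw [hsum] at h
  calc ‖Complex.exp x - (1 + x + x^2/2 + x^3/6)‖
      ≤ ‖x‖ ^ 4 * ((5:ℝ) * ((24:ℝ) * 4)⁻¹) := by
        convert h using 3 <;> norm_num [Nat.factorial]
    _ = ‖x‖^4 * (5/96) := by norm_num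

lemma psi_bound (w : ℂ) (hw : ‖w‖ ≤ 1/3) :
    ‖gBDF (Complex.exp (-w)) - w‖ ≤ 3 * ‖w‖ ^ 4 := by
  have hwnn := norm_nonneg w
  have a1 : ‖-w‖ = ‖w‖ := norm_neg _
  have a2 : ‖-(2*w)‖ = 2 * ‖w‖ := by
    rw [norm_neg, norm_mul]; norm_num
  have a3 : ‖-(3*w)‖ = 3 * ‖w‖ := by
    rw [norm_neg, norm_mul]; norm_num
  have hA := exp_taylor4 (-w) (by rw [a1]; linarith)
  have hB := exp_taylor4 (-(2*w)) (by rw [a2]; linarith)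
  have hC := exp_taylor4 (-(3*w)) (by rw [a3]; linarith)
  rw [a1] at hA; rw [a2] at hB; rw [a3] at hC
  set A := Complex.exp (-w) - (1 + (-w) + (-w)^2/2 + (-w)^3/6) with hAd
  set B := Complex.exp (-(2*w)) - (1 + (-(2*w)) + (-(2*w))^2/2 + (-(2*w))^3/6) with hBd
  set C := Complex.exp (-(3*w)) - (1 + (-(3*w)) + (-(3*w))^2/2 + (-(3*w))^3/6) with hCd
  have e2 : Complex.exp (-w) ^ 2 = Complex.exp (-(2*w)) := by
    rw [← Complex.exp_nat_mul]; norm_num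
  have e3 : Complex.exp (-w) ^ 3 = Complex.exp (-(3*w)) := by
    rw [← Complex.exp_nat_mul]; norm_num
  have key : gBDF (Complex.exp (-w)) - w = (-3)*A + (3/2)*B + (-1/3)*C := by
    rw [hAd, hBd, hCd]
    unfold gBDF
    rw [e2, e3]
    ring
  rw [key]
  have habsE : ‖(-3)*A + (3/2)*B + (-1/3)*C‖
      ≤ 3*‖A‖ + (3/2)*‖B‖ + (1/3)*‖C‖ := by
    calc ‖(-3)*A + (3/2)*B + (-1/3)*C‖
        ≤ ‖(-3)*A + (3/2)*B‖ + ‖(-1/3)*C‖ := norm_add_le _ _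
      _ ≤ (‖(-3)*A‖ + ‖(3/2)*B‖) + ‖(-1/3)*C‖ :=
          add_le_add_left (norm_add_le _ _) _
      _ = 3*‖A‖ + (3/2)*‖B‖ + (1/3)*‖C‖ := by
          rw [norm_mul, norm_mul, norm_mul]
          norm_num
  refine le_trans habsE ?_
  nlinarith [hA, hB, hC, norm_nonneg A, norm_nonneg B, norm_nonneg C]

lemma seg_close {w a p : ℂ} (hp : p ∈ segment ℝ w a) : ‖p - w‖ ≤ ‖a - w‖ := by
  have hsub : segment ℝ w a ⊆ Metric.closedBall w (‖a - w‖) := by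
    apply (convex_closedBall w (‖a - w‖)).segment_subset
    · simp
    · simp [Metric.mem_closedBall, Complex.dist_eq]
  have := hsub hp
  simpa [Metric.mem_closedBall, Complex.dist_eq] using this

lemma seg_slit {w p : ℂ} (hw : w ≠ 0) (harg : w.re ≥ -(‖w‖)/5)
    (hclose : ‖p - w‖ ≤ ‖w‖ / 9) : p ∈ Complex.slitPlane := by
  rw [Complex.mem_slitPlane_iff]
  by_contra hcon
  push_neg at hcon
  obtain ⟨hpre, hpim⟩ := hcon
  have hwpos : 0 < ‖w‖ := norm_pos_iff.mpr hw
  have hsq : ‖p - w‖^2 ≤ (‖w‖/9)^2 := by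
    nlinarith [norm_nonneg (p - w)]
  have heq : ‖p - w‖ ^ 2 = (p.re - w.re)^2 + (p.im - w.im)^2 := by
    rw [Complex.sq_norm, Complex.normSq_apply]; simp [Complex.sub_re, Complex.sub_im]; ring
  rw [hpim] at heq
  have h1 : (p.re - w.re)^2 + w.im^2 ≤ (‖w‖/9)^2 := by nlinarith [heq, hsq]
  have h2 : w.re^2 + w.im^2 = ‖w‖ ^ 2 := by
    rw [Complex.sq_norm, Complex.normSq_apply]; ring
  have hwre : 0 < w.re := by
    by_contra hneg
    push_neg at hneg
    have hms := mul_self_le_mul_self (show (0:ℝ) ≤ -w.re by linarith)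
      (show -w.re ≤ ‖w‖/5 by linarith)
    nlinarith [hms, h1, h2, hwpos]
  have hfin : (p.re - w.re)^2 ≥ w.re^2 := by
    nlinarith [mul_nonneg (neg_nonneg.mpr hpre) (show (0:ℝ) ≤ 2*w.re - p.re by linarith)]
  nlinarith [h1, h2, hfin, hwpos]

lemma near_bound (α : ℝ) (hα1 : 1 < α) (hα2 : α < 2) (w : ℂ) (hw : w ≠ 0)
    (hre5 : w.re ≥ -(‖w‖)/5) (hsmall : ‖w‖ ≤ 1/3) :
    ‖gBDF (Complex.exp (-w)) ^ (α:ℂ) - w ^ (α:ℂ)‖ ≤ 7 * ‖w‖ ^ (3+α) := by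
  set a := gBDF (Complex.exp (-w)) with ha
  set r := ‖w‖ with hr
  have hrpos : 0 < r := norm_pos_iff.mpr hw
  have hψ : ‖a - w‖ ≤ 3 * r^4 := psi_bound w hsmall
  have hr3 : r^3 ≤ 1/27 := by
    calc r^3 ≤ (1/3:ℝ)^3 := pow_le_pow_left₀ hrpos.le hsmall 3
      _ = 1/27 := by norm_num
  have hclose : ‖a - w‖ ≤ r/9 := by nlinarith [hψ, hr3, hrpos]
  -- segment facts
  have hsegclose : ∀ p ∈ segment ℝ w a, ‖p - w‖ ≤ r/9 :=
    fun p hp => le_trans (seg_close hp) hclose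
  have hsegslit : ∀ p ∈ segment ℝ w a, p ∈ Complex.slitPlane :=
    fun p hp => seg_slit hw hre5 (hsegclose p hp)
  have hsegabs : ∀ p ∈ segment ℝ w a, ‖p‖ ≤ (10/9) * r := by
    intro p hp
    have : ‖p‖ ≤ ‖w‖ + ‖p - w‖ := by
      calc ‖p‖ = ‖w + (p - w)‖ := by ring_nf
        _ ≤ ‖w‖ + ‖p - w‖ := norm_add_le _ _
    linarith [hsegclose p hp]
  set C : ℝ := 2 * ((10/9) * r) ^ (α - 1) with hC
  have hmvt : ‖a ^ (α:ℂ) - w ^ (α:ℂ)‖ ≤ C * ‖a - w‖ := by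
    apply (convex_segment w a).norm_image_sub_le_of_norm_hasDerivWithin_le
      (f := fun z => z ^ (α:ℂ)) (f' := fun p => (α:ℂ) * p ^ ((α:ℂ) - 1))
    · intro p hp
      exact (Complex.hasStrictDerivAt_cpow_const (hsegslit p hp)).hasDerivAt.hasDerivWithinAt
    · intro p hp
      have hcast : (α:ℂ) - 1 = ((α - 1 : ℝ) : ℂ) := by push_cast; ring
      rw [norm_mul, hcast, Complex.norm_cpow_real]
      have h1 : ‖(α:ℂ)‖ = α := by
        rw [Complex.norm_real, Real.norm_eq_abs, _root_.abs_of_pos (by linarith)]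
      rw [h1]
      have h2 : ‖p‖ ^ (α - 1) ≤ ((10/9) * r) ^ (α - 1) :=
        Real.rpow_le_rpow (norm_nonneg p) (hsegabs p hp) (by linarith)
      have h3 : ((10/9) * r) ^ (α - 1) ≥ 0 := Real.rpow_nonneg (by positivity) _
      rw [hC]
      nlinarith [h2, h3, Real.rpow_nonneg (norm_nonneg p) (α - 1)]
    · exact left_mem_segment ℝ w a
    · exact right_mem_segment ℝ w a
  have hCval : C * ‖a - w‖ ≤ 7 * r ^ (3 + α) := by
    have hsplit : ((10/9) * r) ^ (α - 1) = (10/9:ℝ) ^ (α - 1) * r ^ (α - 1) :=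
      Real.mul_rpow (by norm_num) hrpos.le
    have h109 : (10/9:ℝ) ^ (α - 1) ≤ 10/9 := by
      calc (10/9:ℝ) ^ (α - 1) ≤ (10/9:ℝ) ^ (1:ℝ) :=
        Real.rpow_le_rpow_of_exponent_le (by norm_num) (by linarith)
        _ = 10/9 := Real.rpow_one _
    have hrcomb : r ^ (α - 1) * r ^ 4 = r ^ (3 + α) := by
      rw [show (r:ℝ)^4 = r ^ ((4:ℕ):ℝ) from (Real.rpow_natCast r 4).symm,
        ← Real.rpow_add hrpos]
      norm_num
      ring_nf
    have hra : 0 ≤ r ^ (α - 1) := Real.rpow_nonneg hrpos.le _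
    have hrppos : 0 ≤ r ^ (3+α) := Real.rpow_nonneg hrpos.le _
    calc C * ‖a - w‖ ≤ C * (3 * r^4) := by
          apply mul_le_mul_of_nonneg_left hψ
          rw [hC]; positivity
      _ = 6 * ((10/9:ℝ) ^ (α - 1) * r ^ (α - 1)) * r^4 := by rw [hC, hsplit]; ring
      _ ≤ 6 * ((10/9:ℝ) * r ^ (α - 1)) * r^4 := by
          have h4 : (0:ℝ) ≤ r^4 := by positivity
          nlinarith [mul_le_mul_of_nonneg_right h109 hra]
      _ = (20/3) * (r ^ (α - 1) * r ^ 4) := by ring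
      _ = (20/3) * r ^ (3 + α) := by rw [hrcomb]
      _ ≤ 7 * r ^ (3 + α) := by nlinarith [hrppos]
  exact le_trans hmvt hCval

lemma far_bound (α : ℝ) (hα1 : 1 < α) (hα2 : α < 2) (w : ℂ) (hw : w ≠ 0)
    (hre : -(4/5) ≤ w.re) (hbig : 1/3 ≤ ‖w‖) (habs : ‖w‖ ≤ 4) :
    ‖gBDF (Complex.exp (-w)) ^ (α:ℂ) - w ^ (α:ℂ)‖ ≤ 110000 * ‖w‖ ^ (3+α) := by
  set u := Complex.exp (-w) with hu
  set r := ‖w‖ with hr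
  have habsu : ‖u‖ ≤ 2.23 := by
    rw [hu, Complex.norm_exp]
    calc Real.exp (-w).re ≤ Real.exp (4/5) := by
          apply Real.exp_le_exp.mpr; simp; linarith
      _ ≤ 2.23 := exp45
  have hunn := norm_nonneg u
  have haa : ‖gBDF u‖ ≤ 20 := by
    have step : ‖gBDF u‖ ≤ 11/6 + 3*‖u‖ + 3/2*‖u‖^2
        + 1/3*‖u‖^3 := by
      unfold gBDF
      calc ‖11/6 - 3*u + (3/2)*u^2 - (1/3)*u^3‖
          ≤ ‖11/6 - 3*u + (3/2)*u^2‖ + ‖(1/3)*u^3‖ :=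
            norm_sub_le _ _
        _ ≤ (‖11/6 - 3*u‖ + ‖(3/2)*u^2‖) + ‖(1/3)*u^3‖ := by
            gcongr
            exact norm_add_le _ _
        _ ≤ ((‖(11/6 : ℂ)‖ + ‖3*u‖) + ‖(3/2)*u^2‖)
            + ‖(1/3)*u^3‖ := by
            gcongr
            exact norm_sub_le _ _
        _ = 11/6 + 3*‖u‖ + 3/2*‖u‖^2 + 1/3*‖u‖^3 := by
            rw [norm_mul, norm_mul, norm_mul, norm_pow, norm_pow]
            norm_num
    nlinarith [habsu, hunn, step]
  have hbound : ‖gBDF u ^ (α:ℂ) - w ^ (α:ℂ)‖ ≤ 416 := by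
    have h1 : ‖gBDF u ^ (α:ℂ)‖ ≤ 400 := by
      rw [Complex.norm_cpow_real]
      calc ‖gBDF u‖ ^ α ≤ (20:ℝ) ^ α :=
            Real.rpow_le_rpow (norm_nonneg _) haa (by linarith)
        _ ≤ (20:ℝ) ^ (2:ℝ) := Real.rpow_le_rpow_of_exponent_le (by norm_num) (by linarith)
        _ = 400 := by
            rw [show (2:ℝ) = ((2:ℕ):ℝ) by norm_num, Real.rpow_natCast]; norm_num
    have h2 : ‖w ^ (α:ℂ)‖ ≤ 16 := by
      rw [Complex.norm_cpow_real]
      calc ‖w‖ ^ α ≤ (4:ℝ) ^ α :=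
            Real.rpow_le_rpow (norm_nonneg _) habs (by linarith)
        _ ≤ (4:ℝ) ^ (2:ℝ) := Real.rpow_le_rpow_of_exponent_le (by norm_num) (by linarith)
        _ = 16 := by
            rw [show (2:ℝ) = ((2:ℕ):ℝ) by norm_num, Real.rpow_natCast]; norm_num
    calc ‖gBDF u ^ (α:ℂ) - w ^ (α:ℂ)‖
        ≤ ‖gBDF u ^ (α:ℂ)‖ + ‖w ^ (α:ℂ)‖ := norm_sub_le _ _
      _ ≤ 416 := by linarith
  have hrp : (1/243:ℝ) ≤ r ^ (3+α) := by
    have h1 : (1/3:ℝ) ^ ((3:ℝ)+α) ≤ r ^ (3+α) :=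
      Real.rpow_le_rpow (by norm_num) hbig (by linarith)
    have h2 : (1/3:ℝ) ^ ((5:ℝ)) ≤ (1/3:ℝ) ^ ((3:ℝ)+α) :=
      Real.rpow_le_rpow_of_exponent_ge (by norm_num) (by norm_num) (by linarith)
    have h3 : (1/3:ℝ) ^ ((5:ℝ)) = 1/243 := by
      rw [show (5:ℝ) = ((5:ℕ):ℝ) by norm_num, Real.rpow_natCast]; norm_num
    linarith
  calc ‖gBDF u ^ (α:ℂ) - w ^ (α:ℂ)‖ ≤ 416 := hbound
    _ ≤ 110000 * r ^ (3+α) := by nlinarith [hrp]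

lemma cpow_real_mul (r : ℝ) (hr : 0 < r) (x : ℂ) (hx : x ≠ 0) (s : ℂ) :
    ((r:ℂ) * x) ^ s = (r:ℂ) ^ s * x ^ s := by
  have hr' : (r:ℂ) ≠ 0 := by exact_mod_cast hr.ne'
  rw [Complex.cpow_def_of_ne_zero (mul_ne_zero hr' hx),
      Complex.log_ofReal_mul hr hx, add_mul, Complex.exp_add,
      ← Complex.cpow_def_of_ne_zero hx]
  congr 1
  rw [Complex.cpow_def_of_ne_zero hr', Complex.ofReal_log hr.le]

lemma key_bound (α : ℝ) (hα1 : 1 < α) (hα2 : α < 2) (w : ℂ) (hw : w ≠ 0)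
    (harg : |w.arg| ≤ Real.pi/2 + 1/5) (habs : ‖w‖ ≤ 4) :
    gBDF (Complex.exp (-w)) ≠ 0 ∧
      ‖gBDF (Complex.exp (-w)) ^ (α:ℂ) - w ^ (α:ℂ)‖ ≤
        110000 * ‖w‖ ^ (3+α) := by
  have hpi : (3:ℝ) < Real.pi := Real.pi_gt_three
  have hcos : Real.cos w.arg ≥ -(1/5) := by
    have h1 : Real.cos (Real.pi/2 + 1/5) ≤ Real.cos |w.arg| :=
      Real.cos_le_cos_of_nonneg_of_le_pi (abs_nonneg _) (by linarith) harg
    have h2 : Real.cos (Real.pi/2 + 1/5) = -Real.sin (1/5) := by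
      rw [Real.cos_add]; simp
    have h3 : Real.sin (1/5) ≤ 1/5 := Real.sin_le (by norm_num)
    rw [Real.cos_abs] at h1
    linarith
  have hre5 : w.re ≥ -(‖w‖)/5 := by
    have := Complex.norm_mul_cos_arg w
    nlinarith [norm_nonneg w, hcos, this]
  have hre : -(4/5) ≤ w.re := by nlinarith [hre5, habs, norm_nonneg w]
  refine ⟨gBDF_ne w hw hre habs, ?_⟩
  rcases le_or_gt (‖w‖) (1/3) with hsmall | hbig
  · have h7 := near_bound α hα1 hα2 w hw hre5 hsmall
    have : (0:ℝ) ≤ ‖w‖ ^ (3+α) := Real.rpow_nonneg (norm_nonneg w) _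
    linarith
  · exact far_bound α hα1 hα2 w hw hre hbig.le habs

theorem bdf3_symbol_fractional_power_consistency (α : ℝ) (hα : α ∈ Ioo (1 : ℝ) 2) :
    ∃ θ₀ ∈ Ioo (Real.pi / 2) Real.pi, ∀ θ ∈ Ioo (Real.pi / 2) θ₀,
      ∃ c > (0 : ℝ),
        ∀ τ : ℝ, 0 < τ → ∀ z ∈ Dset τ θ,
          bdf3 τ (Complex.exp (-z * τ)) ≠ 0 ∧
          ‖(bdf3 τ (Complex.exp (-z * τ))) ^ (α : ℂ) - z ^ (α : ℂ)‖ ≤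
            c * τ ^ 3 * ‖z‖ ^ (3 + α) := by
  obtain ⟨hα1, hα2⟩ := hα
  have hpi : (3:ℝ) < Real.pi := Real.pi_gt_three
  refine ⟨Real.pi/2 + 1/5, ⟨by linarith, by linarith⟩, ?_⟩
  intro θ hθ
  obtain ⟨hθ1, hθ2⟩ := hθ
  refine ⟨110000, by norm_num, ?_⟩
  intro τ hτ z hz
  obtain ⟨hz0, hcase⟩ := hz
  set w : ℂ := z * (τ:ℂ) with hwdef
  have hτ0 : (τ:ℂ) ≠ 0 := by exact_mod_cast hτ.ne'
  have hw0 : w ≠ 0 := mul_ne_zero hz0 hτ0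
  have hargw : w.arg = z.arg := by
    rw [hwdef, mul_comm, Complex.arg_real_mul z hτ]
  have habsw : ‖w‖ = ‖z‖ * τ := by
    rw [hwdef, norm_mul, Complex.norm_real, Real.norm_eq_abs, _root_.abs_of_pos hτ]
  -- region facts for w
  have hargle : |w.arg| ≤ Real.pi/2 + 1/5 := by
    rw [hargw]
    rcases hcase with ⟨h1, _⟩ | ⟨_, h2⟩
    · rw [h1]; linarith
    · linarith
  have habs4 : ‖w‖ ≤ 4 := by
    rcases hcase with ⟨h1, h2⟩ | ⟨h1, _⟩
    · -- ray case
      have himw : |w.im| ≤ Real.pi := by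
        have : w.im = z.im * τ := by
          rw [hwdef]; simp [Complex.mul_im]
        rw [this, abs_mul, _root_.abs_of_pos hτ]
        calc |z.im| * τ ≤ (Real.pi / τ) * τ := by
              apply mul_le_mul_of_nonneg_right h2 hτ.le
          _ = Real.pi := by field_simp
      have hsinθ : Real.sin θ ≥ 49/50 := by
        have hcos : Real.cos (θ - Real.pi/2) = Real.sin θ := Real.cos_sub_pi_div_two θ
        have hb : 1 - (θ - Real.pi/2)^2/2 ≤ Real.cos (θ - Real.pi/2) :=
          Real.one_sub_sq_div_two_le_cos
        have h01 : 0 ≤ θ - Real.pi/2 := by linarith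
        have h02 : θ - Real.pi/2 ≤ 1/5 := by linarith
        nlinarith [hb, hcos]
      have hsinarg : |Real.sin w.arg| = Real.sin θ := by
        rw [hargw]
        rcases abs_eq (by linarith : (0:ℝ) ≤ θ) |>.mp h1 with he | he
        · rw [he, _root_.abs_of_nonneg]
          apply Real.sin_nonneg_of_nonneg_of_le_pi <;> linarith
        · rw [he, Real.sin_neg, abs_neg, _root_.abs_of_nonneg]
          apply Real.sin_nonneg_of_nonneg_of_le_pi <;> linarith
      have him2 : |w.im| = ‖w‖ * Real.sin θ := by
        rw [← Complex.norm_mul_sin_arg w, abs_mul, _root_.abs_of_nonneg (norm_nonneg w),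
          hsinarg]
      have hpil : Real.pi < 3.15 := Real.pi_lt_d2
      nlinarith [norm_nonneg w, him2 ▸ himw, hsinθ]
    · -- disk case
      rw [habsw]
      calc ‖z‖ * τ ≤ (1/τ) * τ := mul_le_mul_of_nonneg_right h1 hτ.le
        _ = 1 := by field_simp
        _ ≤ 4 := by norm_num
  obtain ⟨hne, hkb⟩ := key_bound α hα1 hα2 w hw0 hargle habs4
  have hexpw : Complex.exp (-z * τ) = Complex.exp (-w) := by
    rw [hwdef]; ring_nf
  have hbdf : bdf3 τ (Complex.exp (-z * τ)) = (τ:ℂ)⁻¹ * gBDF (Complex.exp (-w)) := by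
    rw [hexpw]; rfl
  constructor
  · rw [hbdf]
    exact mul_ne_zero (inv_ne_zero hτ0) hne
  · -- the quantitative bound
    set t : ℝ := τ⁻¹ with htdef
    have ht : 0 < t := inv_pos.mpr hτ
    have hti : (τ:ℂ)⁻¹ = ((t:ℝ):ℂ) := by rw [htdef]; push_cast; ring
    have hzw : z = (t:ℂ) * w := by
      rw [hwdef, htdef]; push_cast; field_simp
    have hsplit : bdf3 τ (Complex.exp (-z * τ)) ^ (α:ℂ) - z ^ (α:ℂ)
        = ((t:ℝ):ℂ) ^ (α:ℂ) * (gBDF (Complex.exp (-w)) ^ (α:ℂ) - w ^ (α:ℂ)) := by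
      rw [hbdf, hti, hzw, cpow_real_mul t ht _ hne, cpow_real_mul t ht w hw0, mul_sub]
    rw [hsplit, norm_mul]
    have habst : ‖((t:ℝ):ℂ) ^ (α:ℂ)‖ = t ^ α := by
      rw [Complex.norm_cpow_eq_rpow_re_of_pos ht]
      simp
    rw [habst]
    have habsz : ‖z‖ = t * ‖w‖ := by
      rw [hzw, norm_mul, Complex.norm_real, Real.norm_eq_abs, _root_.abs_of_pos ht]
    rw [habsz]
    have hmul : (t * ‖w‖) ^ (3+α) = t ^ (3+α) * ‖w‖ ^ (3+α) :=
      Real.mul_rpow ht.le (norm_nonneg w)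
    rw [hmul]
    have hτt : τ ^ 3 * t ^ (3+α) = t ^ α := by
      rw [Real.rpow_add ht, show t ^ (3:ℝ) = t ^ (3:ℕ) by
        rw [← Real.rpow_natCast t 3]; norm_num]
      have : τ ^ 3 * t ^ 3 = 1 := by
        rw [htdef]; field_simp
      calc τ ^ 3 * (t ^ 3 * t ^ α) = (τ ^ 3 * t ^ 3) * t ^ α := by ring
        _ = t ^ α := by rw [this, one_mul]
    calc t ^ α * ‖gBDF (Complex.exp (-w)) ^ (α:ℂ) - w ^ (α:ℂ)‖
        ≤ t ^ α * (110000 * ‖w‖ ^ (3+α)) := by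
          apply mul_le_mul_of_nonneg_left hkb (Real.rpow_nonneg ht.le α)
      _ = 110000 * (τ ^ 3 * t ^ (3+α)) * ‖w‖ ^ (3+α) := by rw [hτt]; ring
      _ = 110000 * τ ^ 3 * (t ^ (3+α) * ‖w‖ ^ (3+α)) := by ring
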